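/- Let n ≥ 1 be an integer, δ > 1, M ≥ 1 an integer, j, k ∈ ℤ, and let r satisfy n/(n+1) < r < 1. Let {Q_τ}_{τ ∈ ℤⁿ} be the partition of ℝⁿ into cubes of side length δ^{-j-M}, namely Q_τ = Π_{i=1}^{n} [δ^{-j-M} τ_i, δ^{-j-M}(τ_i + 1)); for each τ pick a point y_τ ∈ Q_τ and a number a_τ ≥ 0. Then there exists a constant C = C(n,r) > 0, independent of δ, M, j, k, the points y_τ and the numbers a_τ, such that for all x ∈ ℝⁿ: Σ_τ |Q_τ| · [ δ^{-min(j,k)} / (δ^{-min(j,k)} + |x − y_τ|)^{n+1} ] · a_τ ≤ C · δ^{M n (1/r − 1)} · δ^{(j − min(j,k)) n (1/r − 1)} · [ M( Σ_τ a_τ^r χ_{Q_τ} )(x) ]^{1/r}. -/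

import Mathlib

open MeasureTheory Set
open scoped ENNReal

/-- The centered Hardy–Littlewood maximal function
`Mg(x) = sup_{R>0} (1/|B(x,R)|) ∫_{B(x,R)} |g(z)| dz` (as an `ℝ≥0∞`-valued function). -/
noncomputable def hlMax {n : ℕ} (g : EuclideanSpace ℝ (Fin n) → ℝ)
    (x : EuclideanSpace ℝ (Fin n)) : ℝ≥0∞ :=
  ⨆ (R : ℝ) (_ : 0 < R),
    (volume (Metric.ball x R))⁻¹ * ∫⁻ z in Metric.ball x R, ENNReal.ofReal |g z|

/-- The δ-dyadic cube `Q_τ = Π_i [δ^{-l} τ_i, δ^{-l}(τ_i+1))` of side length `δ^{-l}`. -/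
def dyadicCube (n : ℕ) (δ : ℝ) (l : ℤ) (τ : Fin n → ℤ) :
    Set (EuclideanSpace ℝ (Fin n)) :=
  {x | ∀ i, δ ^ (-l) * (τ i : ℝ) ≤ x i ∧ x i < δ ^ (-l) * ((τ i : ℝ) + 1)}

lemma fj_tsum_le_rpow {ι : Type*} (f : ι → ℝ≥0∞) {p : ℝ} (hp : 0 < p) (hp1 : p ≤ 1) :
    ∑' i, f i ≤ (∑' i, f i ^ p) ^ (1 / p) := by
  have key : ∀ s : Finset ι, (∑ i ∈ s, f i) ≤ (∑' i, f i ^ p) ^ (1 / p) := by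
    intro s
    have h1 : (∑ i ∈ s, f i) ^ p ≤ ∑ i ∈ s, f i ^ p := by
      induction s using Finset.cons_induction with
      | empty => simp [ENNReal.zero_rpow_of_pos hp]
      | cons a s ha ih =>
        rw [Finset.sum_cons, Finset.sum_cons]
        exact le_trans (ENNReal.rpow_add_le_add_rpow _ _ hp.le hp1)
          (add_le_add le_rfl ih)
    calc ∑ i ∈ s, f i = ((∑ i ∈ s, f i) ^ p) ^ (1 / p) := by
          rw [← ENNReal.rpow_mul, mul_one_div, div_self hp.ne', ENNReal.rpow_one]
    _ ≤ (∑ i ∈ s, f i ^ p) ^ (1 / p) := ENNReal.rpow_le_rpow h1 (by positivity)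
    _ ≤ (∑' i, f i ^ p) ^ (1 / p) := ENNReal.rpow_le_rpow (ENNReal.sum_le_tsum s) (by positivity)
  rw [ENNReal.tsum_eq_iSup_sum]
  exact iSup_le key

lemma fj_volume_box (n : ℕ) (l u : Fin n → ℝ) :
    volume {x : EuclideanSpace ℝ (Fin n) | ∀ i, l i ≤ x i ∧ x i < u i}
      = ∏ i, ENNReal.ofReal (u i - l i) := by
  have hset : {x : EuclideanSpace ℝ (Fin n) | ∀ i, l i ≤ x i ∧ x i < u i}
      = (MeasurableEquiv.toLp 2 (Fin n → ℝ)).symm ⁻¹'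
          (Set.univ.pi fun i => Set.Ico (l i) (u i)) := by
    ext x
    simp [Set.mem_pi, Set.mem_Ico]
  rw [hset, (EuclideanSpace.volume_preserving_symm_measurableEquiv_toLp (Fin n)).measure_preimage
    ((MeasurableSet.univ_pi fun i => measurableSet_Ico).nullMeasurableSet)]
  rw [volume_pi_pi]
  simp [Real.volume_Ico]

lemma fj_measurable_box (n : ℕ) (l u : Fin n → ℝ) :
    MeasurableSet {x : EuclideanSpace ℝ (Fin n) | ∀ i, l i ≤ x i ∧ x i < u i} := by
  have : {x : EuclideanSpace ℝ (Fin n) | ∀ i, l i ≤ x i ∧ x i < u i}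
      = ⋂ i, (fun x : EuclideanSpace ℝ (Fin n) => x i) ⁻¹' (Set.Ico (l i) (u i)) := by
    ext x; simp [Set.mem_Ico]
  rw [this]
  refine MeasurableSet.iInter fun i => ?_
  exact ((measurable_pi_apply i).comp
    (MeasurableEquiv.toLp 2 (Fin n → ℝ)).symm.measurable) measurableSet_Ico

lemma fj_coord_dist_le {n : ℕ} (x z : EuclideanSpace ℝ (Fin n)) (i : Fin n) :
    dist (x i) (z i) ≤ dist x z := by
  rw [EuclideanSpace.dist_eq]
  have h1 : dist (x i) (z i) = Real.sqrt (dist (x i) (z i) ^ 2) := by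
    rw [Real.sqrt_sq dist_nonneg]
  rw [h1]
  apply Real.sqrt_le_sqrt
  exact Finset.single_le_sum (f := fun i => dist (x i) (z i) ^ 2)
    (fun _ _ => sq_nonneg _) (Finset.mem_univ i)

lemma fj_cube_volume (n : ℕ) (δ : ℝ) (l : ℤ) (τ : Fin n → ℤ) :
    volume (dyadicCube n δ l τ) = ENNReal.ofReal (δ ^ (-l)) ^ n := by
  rw [show dyadicCube n δ l τ = {x : EuclideanSpace ℝ (Fin n) |
      ∀ i, (fun i => δ ^ (-l) * (τ i : ℝ)) i ≤ x i ∧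
        x i < (fun i => δ ^ (-l) * ((τ i : ℝ) + 1)) i} from rfl]
  rw [fj_volume_box]
  have : ∀ i : Fin n, δ ^ (-l) * ((τ i : ℝ) + 1) - δ ^ (-l) * (τ i : ℝ) = δ ^ (-l) := by
    intro i; ring
  simp only [this]
  rw [Finset.prod_const, Finset.card_univ, Fintype.card_fin]

lemma fj_cube_measurable (n : ℕ) (δ : ℝ) (l : ℤ) (τ : Fin n → ℤ) :
    MeasurableSet (dyadicCube n δ l τ) :=
  fj_measurable_box n _ _

lemma fj_cube_dist {n : ℕ} {δ : ℝ} (hδ : 0 < δ) {l : ℤ} {τ : Fin n → ℤ}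
    {z w : EuclideanSpace ℝ (Fin n)} (hz : z ∈ dyadicCube n δ l τ)
    (hw : w ∈ dyadicCube n δ l τ) :
    dist z w ≤ Real.sqrt n * δ ^ (-l) := by
  have hs : (0:ℝ) < δ ^ (-l) := zpow_pos hδ _
  rw [EuclideanSpace.dist_eq]
  have hcoord : ∀ i, dist (z i) (w i) ≤ δ ^ (-l) := by
    intro i
    obtain ⟨hz1, hz2⟩ := hz i
    obtain ⟨hw1, hw2⟩ := hw i
    rw [Real.dist_eq, abs_sub_le_iff]
    constructor <;> nlinarith
  calc Real.sqrt (∑ i, dist (z i) (w i) ^ 2)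
      ≤ Real.sqrt (∑ _i : Fin n, (δ ^ (-l)) ^ 2) := by
        apply Real.sqrt_le_sqrt
        exact Finset.sum_le_sum fun i _ => pow_le_pow_left₀ dist_nonneg (hcoord i) 2
    _ = Real.sqrt n * δ ^ (-l) := by
        rw [Finset.sum_const, Finset.card_univ, Fintype.card_fin, nsmul_eq_mul,
          Real.sqrt_mul (by positivity), Real.sqrt_sq hs.le]

lemma fj_cube_disjoint {n : ℕ} {δ : ℝ} (hδ : 0 < δ) {l : ℤ} {τ τ' : Fin n → ℤ}
    (h : τ ≠ τ') {z : EuclideanSpace ℝ (Fin n)}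
    (hz : z ∈ dyadicCube n δ l τ) (hz' : z ∈ dyadicCube n δ l τ') : False := by
  have hs : (0:ℝ) < δ ^ (-l) := zpow_pos hδ _
  obtain ⟨i, hi⟩ := Function.ne_iff.mp h
  obtain ⟨h1, h2⟩ := hz i
  obtain ⟨h3, h4⟩ := hz' i
  rcases lt_or_gt_of_ne hi with hlt | hlt
  · have : ((τ i : ℝ) + 1) ≤ (τ' i : ℝ) := by exact_mod_cast Int.add_one_le_iff.mpr hlt
    nlinarith
  · have : ((τ' i : ℝ) + 1) ≤ (τ i : ℝ) := by exact_mod_cast Int.add_one_le_iff.mpr hlt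
    nlinarith

/-- Frazier–Jawerth type estimate (claim (4.7) of the paper):
`Σ_τ |Q_τ| δ^{-min(j,k)}/(δ^{-min(j,k)}+|x−y_τ|)^{n+1} a_τ
  ≤ C δ^{Mn(1/r−1)} δ^{(j−min(j,k))n(1/r−1)} [M(Σ_τ a_τ^r χ_{Q_τ})(x)]^{1/r}`. -/
theorem stmt_9 (n : ℕ) (hn : 1 ≤ n) (r : ℝ)
    (hr1 : (n : ℝ) / (n + 1) < r) (hr2 : r < 1) :
    ∃ C > (0:ℝ), ∀ (δ : ℝ), 1 < δ → ∀ (M : ℤ), 1 ≤ M → ∀ (j k : ℤ),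
      ∀ (y : (Fin n → ℤ) → EuclideanSpace ℝ (Fin n)),
      (∀ τ, y τ ∈ dyadicCube n δ (j + M) τ) →
      ∀ (a : (Fin n → ℤ) → ℝ), (∀ τ, 0 ≤ a τ) →
      ∀ (x : EuclideanSpace ℝ (Fin n)),
      (∑' τ : Fin n → ℤ,
          ENNReal.ofReal ((volume (dyadicCube n δ (j + M) τ)).toReal *
            (δ ^ (-(min j k)) /
              (δ ^ (-(min j k)) + dist x (y τ)) ^ (n + 1)) * a τ))
        ≤ ENNReal.ofReal (C * δ ^ ((M : ℝ) * (n : ℝ) * (1 / r - 1)) *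
              δ ^ (((j - min j k : ℤ) : ℝ) * (n : ℝ) * (1 / r - 1))) *
            (hlMax (fun z => ∑' τ : Fin n → ℤ,
                (dyadicCube n δ (j + M) τ).indicator (fun _ => a τ ^ r) z) x)
              ^ (1 / r) := by
  classical
  have hr0 : 0 < r := lt_of_le_of_lt (by positivity) hr1
  have hP : (n : ℝ) < ((n : ℝ) + 1) * r := by
    have := (div_lt_iff₀ (by positivity : (0:ℝ) < (n:ℝ) + 1)).mp hr1
    linarith
  -- global constants
  set A : ℝ := (2:ℝ) ^ (n + 1) with hA_def
  have hA0 : (0:ℝ) < A := by positivity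
  set b : ℝ := A⁻¹ with hb_def
  have hb0 : (0:ℝ) < b := by positivity
  set β : ℝ := b ^ r with hβ_def
  have hβ0 : (0:ℝ) < β := Real.rpow_pos_of_pos hb0 r
  have h2n : (2:ℝ) ^ n < A ^ r := by
    calc (2:ℝ) ^ n = (2:ℝ) ^ (n:ℝ) := (Real.rpow_natCast 2 n).symm
    _ < (2:ℝ) ^ (((n+1:ℕ):ℝ) * r) := by
        rw [Real.rpow_lt_rpow_left_iff (by norm_num)]
        push_cast; linarith
    _ = A ^ r := by rw [Real.rpow_mul (by norm_num), Real.rpow_natCast]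
  have hβA : β = (A ^ r)⁻¹ := by rw [hβ_def, hb_def, Real.inv_rpow hA0.le]
  have hβ2 : β * 2 ^ n < 1 := by
    have hAr : (0:ℝ) < A ^ r := Real.rpow_pos_of_pos hA0 r
    rw [hβA]
    rw [inv_mul_lt_one₀ hAr]
    exact h2n
  set q : ℝ≥0∞ := ENNReal.ofReal (β * 2 ^ n) with hq_def
  have hq1 : q < 1 := by
    rw [hq_def]
    exact ENNReal.ofReal_lt_one.mpr hβ2
  set Sgeo : ℝ≥0∞ := (1 - q)⁻¹ with hS_def
  have hS_ne_top : Sgeo ≠ ⊤ := by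
    rw [hS_def, Ne, ENNReal.inv_eq_top]
    exact (tsub_pos_iff_lt.mpr hq1).ne'
  set c₀ : ℝ := A ^ r * (2 * (1 + Real.sqrt n)) ^ n with hc₀_def
  have hc₀0 : 0 ≤ c₀ := by positivity
  set D : ℝ≥0∞ := (ENNReal.ofReal c₀ * Sgeo) ^ (1/r) with hD_def
  have hD_ne_top : D ≠ ⊤ := by
    rw [hD_def]
    exact (ENNReal.rpow_lt_top_of_nonneg (by positivity)
      (ENNReal.mul_ne_top ENNReal.ofReal_ne_top hS_ne_top)).ne
  refine ⟨D.toReal + 1, by positivity, ?_⟩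
  have hDC : D ≤ ENNReal.ofReal (D.toReal + 1) := by
    conv_lhs => rw [← ENNReal.ofReal_toReal hD_ne_top]
    exact ENNReal.ofReal_le_ofReal (by linarith)
  intro δ hδ M hM j k y hy a ha x
  have hδ0 : (0:ℝ) < δ := lt_trans zero_lt_one hδ
  set s : ℝ := δ ^ (-(j + M)) with hs_def
  set ρ : ℝ := δ ^ (-(min j k)) with hρ_def
  have hs : 0 < s := zpow_pos hδ0 _
  have hρ : 0 < ρ := zpow_pos hδ0 _
  have hsρ : s ≤ ρ := by
    apply zpow_le_zpow_right₀ hδ.le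
    have h1 : min j k ≤ j := min_le_left _ _
    omega
  set g : EuclideanSpace ℝ (Fin n) → ℝ :=
    fun z => ∑' τ : Fin n → ℤ,
      (dyadicCube n δ (j + M) τ).indicator (fun _ => a τ ^ r) z with hg_def
  have hu0 : ∀ τ : Fin n → ℤ, 0 ≤ s ^ n * (ρ / (ρ + dist x (y τ)) ^ (n + 1)) * a τ := by
    intro τ
    have h1 : (0:ℝ) ≤ ρ / (ρ + dist x (y τ)) ^ (n+1) := by positivity
    exact mul_nonneg (mul_nonneg (by positivity) h1) (ha τ)
  have hQvol : ∀ τ : Fin n → ℤ,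
      volume (dyadicCube n δ (j + M) τ) = ENNReal.ofReal (s ^ n) := by
    intro τ
    rw [fj_cube_volume n δ (j+M) τ, ENNReal.ofReal_pow hs.le, hs_def]
  have hQtoReal : ∀ τ : Fin n → ℤ,
      (volume (dyadicCube n δ (j + M) τ)).toReal = s ^ n := by
    intro τ
    rw [hQvol τ, ENNReal.toReal_ofReal (by positivity)]
  -- facts about g
  have hg_mem : ∀ (τ : Fin n → ℤ) z, z ∈ dyadicCube n δ (j + M) τ → g z = a τ ^ r := by
    intro τ z hz
    simp only [hg_def]
    have h1 : ∀ τ' : Fin n → ℤ, τ' ≠ τ →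
        (dyadicCube n δ (j + M) τ').indicator (fun _ => a τ' ^ r) z = 0 := by
      intro τ' hne
      exact Set.indicator_of_notMem (fun hz' => fj_cube_disjoint hδ0 hne hz' hz) _
    rw [tsum_eq_single τ h1, Set.indicator_of_mem hz]
  have hg_pt : ∀ z : EuclideanSpace ℝ (Fin n),
      (∑' τ : Fin n → ℤ, (dyadicCube n δ (j + M) τ).indicator
        (fun _ => ENNReal.ofReal (a τ ^ r)) z) ≤ ENNReal.ofReal |g z| := by
    intro z
    by_cases hz : ∃ τ₀, z ∈ dyadicCube n δ (j + M) τ₀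
    · obtain ⟨τ₀, hτ₀⟩ := hz
      rw [tsum_eq_single τ₀ (fun τ' hne => Set.indicator_of_notMem
        (fun hz' => fj_cube_disjoint hδ0 hne hz' hτ₀) _)]
      rw [Set.indicator_of_mem hτ₀, hg_mem τ₀ z hτ₀,
        abs_of_nonneg (Real.rpow_nonneg (ha τ₀) r)]
    · push_neg at hz
      have h1 : ∀ τ : Fin n → ℤ,
          (dyadicCube n δ (j + M) τ).indicator (fun _ => ENNReal.ofReal (a τ ^ r)) z = 0 :=
        fun τ => Set.indicator_of_notMem (hz τ) _
      simp only [h1, tsum_zero]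
      exact zero_le
  -- maximal function lower bound
  have hmax : ∀ R : ℝ, 0 < R →
      (∫⁻ z in Metric.ball x R, ENNReal.ofReal |g z|)
        ≤ volume (Metric.ball x R) * hlMax g x := by
    intro R hR
    have hv0 : volume (Metric.ball x R) ≠ 0 := (Metric.measure_ball_pos volume x hR).ne'
    have hvt : volume (Metric.ball x R) ≠ ⊤ := measure_ball_lt_top.ne
    have hle : (volume (Metric.ball x R))⁻¹ * ∫⁻ z in Metric.ball x R, ENNReal.ofReal |g z|
        ≤ hlMax g x := by
      unfold hlMax
      exact le_iSup₂ (f := fun (R : ℝ) (_ : 0 < R) =>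
        (volume (Metric.ball x R))⁻¹ * ∫⁻ z in Metric.ball x R, ENNReal.ofReal |g z|) R hR
    calc (∫⁻ z in Metric.ball x R, ENNReal.ofReal |g z|)
        = volume (Metric.ball x R) * ((volume (Metric.ball x R))⁻¹
            * ∫⁻ z in Metric.ball x R, ENNReal.ofReal |g z|) := by
          rw [← mul_assoc, ENNReal.mul_inv_cancel hv0 hvt, one_mul]
      _ ≤ _ := mul_le_mul_right hle _
  -- cubes near x are inside balls
  have hball : ∀ (m : ℕ) (τ : Fin n → ℤ), dist x (y τ) < 2^m * ρ →
      dyadicCube n δ (j+M) τ ⊆ Metric.ball x (2^m * ρ + Real.sqrt n * s) := by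
    intro m τ hτ z hz
    rw [Metric.mem_ball]
    calc dist z x ≤ dist z (y τ) + dist (y τ) x := dist_triangle _ _ _
      _ ≤ Real.sqrt n * s + dist x (y τ) := by
          rw [dist_comm (y τ) x]
          have h2 : dist z (y τ) ≤ Real.sqrt n * s := by
            have := fj_cube_dist hδ0 hz (hy τ)
            rwa [← hs_def] at this
          exact add_le_add h2 le_rfl
      _ < 2^m * ρ + Real.sqrt n * s := by linarith
  -- sum over cubes near x bounded by maximal function
  have hsum_m : ∀ m : ℕ,
      (∑' τ : Fin n → ℤ, if dist x (y τ) < 2^m * ρ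
          then ENNReal.ofReal (s^n * a τ ^ r) else 0)
        ≤ volume (Metric.ball x (2^m * ρ + Real.sqrt n * s)) * hlMax g x := by
    intro m
    have hR : (0:ℝ) < 2^m * ρ + Real.sqrt n * s := by positivity
    have h1 : ∀ τ : Fin n → ℤ,
        (if dist x (y τ) < 2^m * ρ then ENNReal.ofReal (s^n * a τ ^ r) else 0)
          ≤ ∫⁻ z in Metric.ball x (2^m * ρ + Real.sqrt n * s),
              (dyadicCube n δ (j+M) τ).indicator (fun _ => ENNReal.ofReal (a τ ^ r)) z := by
      intro τ
      split_ifs with hτ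
      · rw [lintegral_indicator (fj_cube_measurable n δ (j+M) τ),
          setLIntegral_const, Measure.restrict_apply (fj_cube_measurable n δ (j+M) τ),
          Set.inter_eq_self_of_subset_left (hball m τ hτ), hQvol τ,
          ← ENNReal.ofReal_mul (Real.rpow_nonneg (ha τ) r)]
        rw [mul_comm (a τ ^ r) (s ^ n)]
      · exact zero_le
    calc (∑' τ : Fin n → ℤ, if dist x (y τ) < 2^m * ρ
            then ENNReal.ofReal (s^n * a τ ^ r) else 0)
        ≤ ∑' τ : Fin n → ℤ, ∫⁻ z in Metric.ball x (2^m * ρ + Real.sqrt n * s),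
            (dyadicCube n δ (j+M) τ).indicator (fun _ => ENNReal.ofReal (a τ ^ r)) z :=
          ENNReal.tsum_le_tsum h1
      _ = ∫⁻ z in Metric.ball x (2^m * ρ + Real.sqrt n * s),
            ∑' τ : Fin n → ℤ, (dyadicCube n δ (j+M) τ).indicator
              (fun _ => ENNReal.ofReal (a τ ^ r)) z :=
          (lintegral_tsum (fun τ =>
            ((measurable_const.indicator (fj_cube_measurable n δ (j+M) τ)).aemeasurable))).symm
      _ ≤ ∫⁻ z in Metric.ball x (2^m * ρ + Real.sqrt n * s), ENNReal.ofReal |g z| :=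
          lintegral_mono hg_pt
      _ ≤ volume (Metric.ball x (2^m * ρ + Real.sqrt n * s)) * hlMax g x := hmax _ hR
  -- volume of balls
  have hvol_ball : ∀ m : ℕ, volume (Metric.ball x (2^m * ρ + Real.sqrt n * s))
      ≤ ENNReal.ofReal ((2*(1+Real.sqrt n))^n * ρ^n) * (ENNReal.ofReal ((2:ℝ)^n))^m := by
    intro m
    have hR : (0:ℝ) < 2^m * ρ + Real.sqrt n * s := by positivity
    have hsub : Metric.ball x (2^m * ρ + Real.sqrt n * s) ⊆
        {z : EuclideanSpace ℝ (Fin n) | ∀ i,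
          (fun i => x i - (2^m * ρ + Real.sqrt n * s)) i ≤ z i ∧
          z i < (fun i => x i + (2^m * ρ + Real.sqrt n * s)) i} := by
      intro z hz i
      have h := fj_coord_dist_le z x i
      rw [Metric.mem_ball] at hz
      rw [Real.dist_eq] at h
      have h2 := abs_lt.mp (lt_of_le_of_lt h hz)
      refine ⟨?_, ?_⟩ <;> beta_reduce <;> linarith [h2.1, h2.2]
    have hRle : 2 * (2^m * ρ + Real.sqrt n * s) ≤ (2*(1+Real.sqrt n)*ρ) * 2^m := by
      have h2 : (1:ℝ) ≤ 2^m := one_le_pow₀ (by norm_num)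
      have h3 : (0:ℝ) ≤ Real.sqrt n := Real.sqrt_nonneg n
      have h4 : Real.sqrt n * s ≤ Real.sqrt n * (ρ * 2^m) := by
        apply mul_le_mul_of_nonneg_left _ h3
        nlinarith
      nlinarith [h4]
    calc volume (Metric.ball x (2^m * ρ + Real.sqrt n * s))
        ≤ volume {z : EuclideanSpace ℝ (Fin n) | ∀ i,
            (fun i => x i - (2^m * ρ + Real.sqrt n * s)) i ≤ z i ∧
            z i < (fun i => x i + (2^m * ρ + Real.sqrt n * s)) i} := measure_mono hsub
      _ = ∏ _i : Fin n, ENNReal.ofReal (2 * (2^m * ρ + Real.sqrt n * s)) := by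
          rw [fj_volume_box]
          refine Finset.prod_congr rfl fun i _ => ?_
          beta_reduce
          congr 1
          ring
      _ = ENNReal.ofReal (2 * (2^m * ρ + Real.sqrt n * s)) ^ n := by
          rw [Finset.prod_const, Finset.card_univ, Fintype.card_fin]
      _ ≤ ENNReal.ofReal ((2*(1+Real.sqrt n)*ρ) * 2^m) ^ n :=
          pow_le_pow_left' (ENNReal.ofReal_le_ofReal hRle) n
      _ = ENNReal.ofReal ((2*(1+Real.sqrt n))^n * ρ^n) * (ENNReal.ofReal ((2:ℝ)^n))^m := by
          rw [← ENNReal.ofReal_pow (by positivity), ← ENNReal.ofReal_pow (by positivity),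
            ← ENNReal.ofReal_mul (by positivity)]
          congr 1
          rw [mul_pow, mul_pow, ← pow_mul, mul_comm m n, pow_mul]
  -- layered pointwise bound
  have hlayer : ∀ τ : Fin n → ℤ,
      ENNReal.ofReal (s ^ n * (ρ / (ρ + dist x (y τ)) ^ (n + 1)) * a τ) ^ r
      ≤ ∑' m : ℕ, (ENNReal.ofReal (A^r * ((ρ⁻¹)^n)^r * (s^n)^r * (s^n)⁻¹)
            * (ENNReal.ofReal β)^m)
          * (if dist x (y τ) < 2^m * ρ then ENNReal.ofReal (s^n * a τ ^ r) else 0) := by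
    intro τ
    have hd0 : 0 ≤ dist x (y τ) := dist_nonneg
    have hex : ∃ m : ℕ, dist x (y τ) < 2^m * ρ := by
      obtain ⟨m, hm⟩ := pow_unbounded_of_one_lt (dist x (y τ) / ρ) (by norm_num : (1:ℝ) < 2)
      exact ⟨m, by rwa [div_lt_iff₀ hρ] at hm⟩
    have hlt : dist x (y τ) < 2^(Nat.find hex) * ρ := Nat.find_spec hex
    set m₀ := Nat.find hex with hm₀_def
    have hge : 2^m₀ * ρ / 2 ≤ ρ + dist x (y τ) := by
      rcases Nat.eq_zero_or_pos m₀ with h0 | hpos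
      · rw [h0]; simp; linarith
      · have hmin := Nat.find_min hex (show m₀ - 1 < m₀ from Nat.sub_lt hpos one_pos)
        push_neg at hmin
        have h2 : (2:ℝ)^m₀ = 2 * 2^(m₀-1) := by
          rw [← pow_succ']
          congr 1
          omega
        rw [h2]
        have h3 : (2:ℝ) * 2^(m₀-1) * ρ / 2 = 2^(m₀-1) * ρ := by ring
        rw [h3]
        linarith [hmin]
    have hKb : ρ / (ρ + dist x (y τ)) ^ (n+1) ≤ A * b^m₀ * (ρ⁻¹)^n := by
      have hden : (0:ℝ) < 2^m₀ * ρ / 2 := by positivity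
      have h1 : ρ / (ρ + dist x (y τ)) ^ (n+1) ≤ ρ / (2^m₀ * ρ / 2)^(n+1) :=
        div_le_div_of_nonneg_left hρ.le (pow_pos hden _) (pow_le_pow_left₀ hden.le hge (n+1))
      refine h1.trans_eq ?_
      rw [hb_def, hA_def]
      have h2 : ((2:ℝ)^m₀ * ρ / 2) ^ (n+1) ≠ 0 := by positivity
      rw [div_pow, mul_pow, ← pow_mul, inv_pow, inv_pow, ← pow_mul]
      field_simp
      ring
    have hub : s ^ n * (ρ / (ρ + dist x (y τ)) ^ (n + 1)) * a τ
        ≤ s^n * (A * b^m₀ * (ρ⁻¹)^n) * a τ :=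
      mul_le_mul_of_nonneg_right (mul_le_mul_of_nonneg_left hKb (by positivity)) (ha τ)
    have hbm : ((b:ℝ)^m₀)^r = β^m₀ := by
      rw [← Real.rpow_natCast b m₀, ← Real.rpow_mul hb0.le, mul_comm (m₀:ℝ) r,
        Real.rpow_mul hb0.le, Real.rpow_natCast]
    have hur : (s ^ n * (ρ / (ρ + dist x (y τ)) ^ (n + 1)) * a τ) ^ r
        ≤ (s^n)^r * (A^r * β^m₀ * ((ρ⁻¹)^n)^r) * a τ ^ r := by
      have h3 := Real.rpow_le_rpow (hu0 τ) hub hr0.le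
      have hexp : (s^n * (A * b^m₀ * (ρ⁻¹)^n) * a τ) ^ r
          = (s^n)^r * (A^r * β^m₀ * ((ρ⁻¹)^n)^r) * a τ ^ r := by
        rw [Real.mul_rpow (by positivity) (ha τ),
          Real.mul_rpow (by positivity) (by positivity),
          Real.mul_rpow (by positivity) (by positivity),
          Real.mul_rpow (by positivity) (by positivity), hbm]
      rw [hexp] at h3
      exact h3
    rw [ENNReal.ofReal_rpow_of_nonneg (hu0 τ) hr0.le]
    refine le_trans ?_ (ENNReal.le_tsum m₀)
    rw [if_pos hlt]
    have heq : (ENNReal.ofReal (A^r * ((ρ⁻¹)^n)^r * (s^n)^r * (s^n)⁻¹)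
          * (ENNReal.ofReal β)^m₀) * ENNReal.ofReal (s^n * a τ ^ r)
        = ENNReal.ofReal ((A^r * ((ρ⁻¹)^n)^r * (s^n)^r * (s^n)⁻¹) * β^m₀
            * (s^n * a τ ^ r)) := by
      rw [← ENNReal.ofReal_pow hβ0.le, ← ENNReal.ofReal_mul (by positivity),
        ← ENNReal.ofReal_mul (by positivity)]
    rw [heq]
    apply ENNReal.ofReal_le_ofReal
    refine hur.trans_eq ?_
    have hsn : (s:ℝ)^n ≠ 0 := by positivity
    field_simp
  -- the key estimate
  have hC1C2 : ENNReal.ofReal (A^r * ((ρ⁻¹)^n)^r * (s^n)^r * (s^n)⁻¹)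
      * ENNReal.ofReal ((2*(1+Real.sqrt n))^n * ρ^n)
      = ENNReal.ofReal c₀ * ENNReal.ofReal ((ρ/s) ^ ((n:ℝ) * (1 - r))) := by
    rw [← ENNReal.ofReal_mul (by positivity), ← ENNReal.ofReal_mul hc₀0]
    congr 1
    have hρn : (0:ℝ) < ρ^n := by positivity
    have hsn : (0:ℝ) < s^n := by positivity
    have e1 : ((ρ⁻¹ : ℝ)^n)^r = (ρ^n)^(-r) := by
      rw [inv_pow, Real.inv_rpow hρn.le, ← Real.rpow_neg hρn.le]
    have e2 : ((s:ℝ)^n)^(r-1) = (s^n)^r * (s^n)⁻¹ := by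
      rw [Real.rpow_sub hsn, Real.rpow_one, div_eq_mul_inv]
    have e3 : ((ρ:ℝ)^n)^(-r) * ((s:ℝ)^n)^(r-1) * ρ^n = (ρ/s) ^ ((n:ℝ) * (1 - r)) := by
      have h1 : ((ρ:ℝ)^n)^(-r) * ρ^n = (ρ^n)^(1-r) := by
        rw [show (1 : ℝ) - r = -r + 1 by ring, Real.rpow_add hρn, Real.rpow_one]
      have h2 : ((s:ℝ)^n)^(r-1) = (((s:ℝ)^n)^(1-r))⁻¹ := by
        rw [show r - 1 = -(1-r) by ring, Real.rpow_neg hsn.le]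
      rw [show ((ρ:ℝ)^n)^(-r) * ((s:ℝ)^n)^(r-1) * ρ^n
          = (((ρ:ℝ)^n)^(-r) * ρ^n) * ((s:ℝ)^n)^(r-1) by ring, h1, h2,
        ← div_eq_mul_inv, ← Real.div_rpow hρn.le hsn.le, ← div_pow,
        ← Real.rpow_natCast (ρ/s) n, ← Real.rpow_mul (by positivity)]
    rw [← e3, e1, hc₀_def, e2]
    ring
  have key : (∑' τ : Fin n → ℤ,
      ENNReal.ofReal (s ^ n * (ρ / (ρ + dist x (y τ)) ^ (n + 1)) * a τ) ^ r)
      ≤ ENNReal.ofReal c₀ * ENNReal.ofReal ((ρ/s) ^ ((n:ℝ) * (1 - r))) * Sgeo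
          * hlMax g x := by
    have hγq : ENNReal.ofReal β * ENNReal.ofReal ((2:ℝ)^n) = q := by
      rw [← ENNReal.ofReal_mul hβ0.le]
    calc (∑' τ : Fin n → ℤ,
        ENNReal.ofReal (s ^ n * (ρ / (ρ + dist x (y τ)) ^ (n + 1)) * a τ) ^ r)
        ≤ ∑' τ : Fin n → ℤ, ∑' m : ℕ,
            (ENNReal.ofReal (A^r * ((ρ⁻¹)^n)^r * (s^n)^r * (s^n)⁻¹)
              * (ENNReal.ofReal β)^m)
            * (if dist x (y τ) < 2^m * ρ then ENNReal.ofReal (s^n * a τ ^ r) else 0) :=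
          ENNReal.tsum_le_tsum hlayer
      _ = ∑' m : ℕ, ∑' τ : Fin n → ℤ,
            (ENNReal.ofReal (A^r * ((ρ⁻¹)^n)^r * (s^n)^r * (s^n)⁻¹)
              * (ENNReal.ofReal β)^m)
            * (if dist x (y τ) < 2^m * ρ then ENNReal.ofReal (s^n * a τ ^ r) else 0) :=
          ENNReal.tsum_comm
      _ = ∑' m : ℕ, (ENNReal.ofReal (A^r * ((ρ⁻¹)^n)^r * (s^n)^r * (s^n)⁻¹)
              * (ENNReal.ofReal β)^m)
            * ∑' τ : Fin n → ℤ,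
              (if dist x (y τ) < 2^m * ρ then ENNReal.ofReal (s^n * a τ ^ r) else 0) := by
          exact tsum_congr fun m => ENNReal.tsum_mul_left
      _ ≤ ∑' m : ℕ, (ENNReal.ofReal (A^r * ((ρ⁻¹)^n)^r * (s^n)^r * (s^n)⁻¹)
              * (ENNReal.ofReal β)^m)
            * ((ENNReal.ofReal ((2*(1+Real.sqrt n))^n * ρ^n)
                * (ENNReal.ofReal ((2:ℝ)^n))^m) * hlMax g x) := by
          refine ENNReal.tsum_le_tsum fun m => mul_le_mul_right ?_ _
          exact le_trans (hsum_m m) (mul_le_mul_left (hvol_ball m) _)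
      _ = ∑' m : ℕ, (ENNReal.ofReal (A^r * ((ρ⁻¹)^n)^r * (s^n)^r * (s^n)⁻¹)
              * ENNReal.ofReal ((2*(1+Real.sqrt n))^n * ρ^n) * hlMax g x) * q ^ m := by
          refine tsum_congr fun m => ?_
          rw [← hγq, mul_pow]
          ring
      _ = (ENNReal.ofReal (A^r * ((ρ⁻¹)^n)^r * (s^n)^r * (s^n)⁻¹)
              * ENNReal.ofReal ((2*(1+Real.sqrt n))^n * ρ^n) * hlMax g x)
            * ∑' m : ℕ, q ^ m := ENNReal.tsum_mul_left
      _ = ENNReal.ofReal c₀ * ENNReal.ofReal ((ρ/s) ^ ((n:ℝ) * (1 - r))) * Sgeo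
            * hlMax g x := by
          rw [ENNReal.tsum_geometric, hC1C2, ← hS_def]
          ring
  -- final assembly
  have hρs : ρ / s = δ ^ (((j + M - min j k : ℤ) : ℝ)) := by
    rw [Real.rpow_intCast, hρ_def, hs_def, ← zpow_sub₀ (ne_of_gt hδ0)]
    congr 1
    ring
  have hexp : ENNReal.ofReal ((ρ/s) ^ ((n:ℝ) * (1 - r))) ^ (1/r)
      = ENNReal.ofReal (δ ^ ((M:ℝ) * (n:ℝ) * (1/r - 1))
          * δ ^ (((j - min j k : ℤ) : ℝ) * (n:ℝ) * (1/r - 1))) := by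
    rw [ENNReal.ofReal_rpow_of_nonneg (by positivity) (by positivity)]
    congr 1
    rw [hρs, ← Real.rpow_mul hδ0.le, ← Real.rpow_mul hδ0.le, ← Real.rpow_add hδ0]
    congr 1
    push_cast
    field_simp
    ring
  calc (∑' τ : Fin n → ℤ, ENNReal.ofReal ((volume (dyadicCube n δ (j + M) τ)).toReal *
          (ρ / (ρ + dist x (y τ)) ^ (n + 1)) * a τ))
      = ∑' τ : Fin n → ℤ,
          ENNReal.ofReal (s ^ n * (ρ / (ρ + dist x (y τ)) ^ (n + 1)) * a τ) :=
        tsum_congr fun τ => by rw [hQtoReal τ]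
    _ ≤ (∑' τ : Fin n → ℤ,
          ENNReal.ofReal (s ^ n * (ρ / (ρ + dist x (y τ)) ^ (n + 1)) * a τ) ^ r) ^ (1/r) :=
        fj_tsum_le_rpow _ hr0 hr2.le
    _ ≤ (ENNReal.ofReal c₀ * ENNReal.ofReal ((ρ/s) ^ ((n:ℝ) * (1 - r))) * Sgeo
          * hlMax g x) ^ (1/r) := ENNReal.rpow_le_rpow key (by positivity)
    _ = D * (ENNReal.ofReal ((ρ/s) ^ ((n:ℝ) * (1 - r))) ^ (1/r) * hlMax g x ^ (1/r)) := by
        rw [hD_def, ← ENNReal.mul_rpow_of_nonneg _ _ (by positivity : (0:ℝ) ≤ 1/r),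
          ← ENNReal.mul_rpow_of_nonneg _ _ (by positivity : (0:ℝ) ≤ 1/r)]
        congr 1
        ring
    _ ≤ ENNReal.ofReal (D.toReal + 1)
          * (ENNReal.ofReal ((ρ/s) ^ ((n:ℝ) * (1 - r))) ^ (1/r) * hlMax g x ^ (1/r)) :=
        mul_le_mul_left hDC _
    _ = ENNReal.ofReal ((D.toReal + 1) * δ ^ ((M:ℝ) * (n:ℝ) * (1/r - 1))
          * δ ^ (((j - min j k : ℤ) : ℝ) * (n:ℝ) * (1/r - 1))) * hlMax g x ^ (1/r) := by
        rw [hexp, ← mul_assoc, ← ENNReal.ofReal_mul (by positivity),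
          show (D.toReal + 1) * (δ ^ ((M:ℝ) * (n:ℝ) * (1/r - 1))
            * δ ^ (((j - min j k : ℤ) : ℝ) * (n:ℝ) * (1/r - 1)))
            = (D.toReal + 1) * δ ^ ((M:ℝ) * (n:ℝ) * (1/r - 1))
              * δ ^ (((j - min j k : ℤ) : ℝ) * (n:ℝ) * (1/r - 1)) from (mul_assoc _ _ _).symm]
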